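/- The differential δ and the product on 𝔄_* satisfy the graded Leibniz rule δ(b_Λ b_Γ) = δ(b_Λ) b_Γ + (−1)^{|∩Λ|} b_Λ δ(b_Γ) whenever Λ and Γ are compatible (so the product b_Λ b_Γ is nonzero). -/

import Mathlib

/-- Generators of 𝔄_*: ordered collections Λ = (λ_1, ..., λ_r) of finite subsets of ℤ_{>0}. -/
abbrev Gen := List (Finset ℕ)

/-- The vector space 𝔄_* spanned over ℚ by the generators `b_Λ`. -/
abbrev 𝔄 := Gen →₀ ℚ

/-- Inversion count `ε(A,B) = Σ_{a∈A} |{b ∈ B : b < a}|`. -/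
def eps (A B : Finset ℕ) : ℕ := ∑ a ∈ A, (B.filter (· < a)).card

/-- The (1-based) rank of `a` in the increasingly ordered finite set `T`. -/
def rankIn (T : Finset ℕ) (a : ℕ) : ℕ := (T.filter (· ≤ a)).card

/-- `⋃Λ`. -/
def unionAll (Λ : Gen) : Finset ℕ := Λ.foldr (· ∪ ·) ∅

/-- `⋂Λ` (with `⋂` of the empty collection taken to be `∅`). -/
def interAll : Gen → Finset ℕ
  | [] => ∅
  | a :: t => t.foldr (· ∩ ·) a

/-- Λ and Γ are compatible if one is empty, or they have the same number of elements and
`(⋃Λ) ∩ (⋃Γ) = ∅`. -/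
def Compatible (Λ Γ : Gen) : Prop :=
  Λ = [] ∨ Γ = [] ∨ (Λ.length = Γ.length ∧ Disjoint (unionAll Λ) (unionAll Γ))

/-- `Λ ⊎ Γ = (λ_1 ∪ γ_1, ..., λ_r ∪ γ_r)`. -/
def uplus : Gen → Gen → Gen
  | [], Γ => Γ
  | Λ, [] => Λ
  | Λ, Γ => List.zipWith (· ∪ ·) Λ Γ

-- The product on generators: `b_Λ b_Γ = (−1)^{ε(∩Λ,∩Γ)} b_{Λ⊎Γ}` if Λ and Γ are
-- compatible, and `0` otherwise.
open Classical in
noncomputable def mulGen (Λ Γ : Gen) : 𝔄 :=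
  if Compatible Λ Γ then
    ((-1 : ℚ) ^ eps (interAll Λ) (interAll Γ)) • Finsupp.single (uplus Λ Γ) 1
  else 0

/-- The bilinear extension of the product to 𝔄_*. -/
noncomputable def mulA : 𝔄 →ₗ[ℚ] 𝔄 →ₗ[ℚ] 𝔄 :=
  Finsupp.lift (𝔄 →ₗ[ℚ] 𝔄) ℚ Gen fun Λ => Finsupp.lift 𝔄 ℚ Gen fun Γ => mulGen Λ Γ

/-- The simplicial differential `δ(b_Λ) = Σ_i (−1)^i b_{(∩Λ ∖ α_i, Λ̂)}`: removing
`α ∈ ⋂Λ` from the intersection replaces each `λ_j` by `λ_j ∖ {α}`. -/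
noncomputable def deltaA : 𝔄 →ₗ[ℚ] 𝔄 :=
  Finsupp.lift 𝔄 ℚ Gen fun Λ =>
    ∑ α ∈ interAll Λ,
      ((-1 : ℚ) ^ rankIn (interAll Λ) α) • Finsupp.single (Λ.map (·.erase α)) 1


lemma unionAll_cons (a : Finset ℕ) (t : Gen) : unionAll (a :: t) = a ∪ unionAll t := rfl

lemma foldr_inter_cons (t : Gen) (a b : Finset ℕ) :
    List.foldr (· ∩ ·) a (b :: t) = a ∩ List.foldr (· ∩ ·) b t := by
  induction t generalizing a b with
  | nil => simp [Finset.inter_comm]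
  | cons c t ih =>
    show b ∩ List.foldr _ a (c :: t) = a ∩ List.foldr _ b (c :: t)
    rw [ih a c, ih b c]
    ext x; simp; tauto

lemma interAll_cons_cons (a b : Finset ℕ) (t : Gen) :
    interAll (a :: b :: t) = a ∩ interAll (b :: t) := foldr_inter_cons t a b

lemma interAll_cons_subset (a : Finset ℕ) (t : Gen) : interAll (a :: t) ⊆ a := by
  cases t with
  | nil => simp [interAll]
  | cons b u => rw [interAll_cons_cons]; exact Finset.inter_subset_left

lemma interAll_subset_unionAll (Λ : Gen) : interAll Λ ⊆ unionAll Λ := by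
  cases Λ with
  | nil => simp [interAll]
  | cons a t => exact (interAll_cons_subset a t).trans (by rw [unionAll_cons]; exact Finset.subset_union_left)

lemma uplus_nil_right (Λ : Gen) : uplus Λ [] = Λ := by cases Λ <;> rfl

lemma uplus_cons_cons (a b : Finset ℕ) (t u : Gen) :
    uplus (a :: t) (b :: u) = (a ∪ b) :: List.zipWith (· ∪ ·) t u := rfl

lemma interAll_map_erase (Λ : Gen) (hΛ : Λ ≠ []) (α : ℕ) :
    interAll (Λ.map (·.erase α)) = (interAll Λ).erase α := by
  induction Λ with
  | nil => simp at hΛ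
  | cons a t ih =>
    cases t with
    | nil => simp [interAll]
    | cons b u =>
      simp only [List.map_cons]
      rw [interAll_cons_cons, ← List.map_cons (f := fun x => x.erase α) (a := b) (l := u), interAll_cons_cons,
        ih (by simp)]
      ext x; simp [Finset.mem_erase]; tauto

lemma unionAll_map_erase_subset (Λ : Gen) (α : ℕ) :
    unionAll (Λ.map (·.erase α)) ⊆ unionAll Λ := by
  induction Λ with
  | nil => simp [unionAll]
  | cons a t ih =>
    rw [List.map_cons, unionAll_cons, unionAll_cons]
    exact Finset.union_subset_union (Finset.erase_subset α a) ih

lemma interAll_zipWith (Λ Γ : Gen) (hΛ : Λ ≠ []) (hΓ : Γ ≠ [])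
    (hlen : Λ.length = Γ.length) (hd : Disjoint (unionAll Λ) (unionAll Γ)) :
    interAll (List.zipWith (· ∪ ·) Λ Γ) = interAll Λ ∪ interAll Γ := by
  induction Λ generalizing Γ with
  | nil => simp at hΛ
  | cons a t ih =>
    cases Γ with
    | nil => simp at hΓ
    | cons b u =>
      cases t with
      | nil =>
        cases u with
        | nil => simp [interAll]
        | cons c v => simp at hlen
      | cons a2 t2 =>
        cases u with
        | nil => simp at hlen
        | cons b2 u2 =>
          simp only [List.zipWith_cons_cons]
          rw [interAll_cons_cons, interAll_cons_cons, interAll_cons_cons,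
            ← List.zipWith_cons_cons]
          rw [unionAll_cons, unionAll_cons] at hd
          rw [ih (b2 :: u2) (by simp) (by simp) (by simpa using hlen)
            (hd.mono Finset.subset_union_right Finset.subset_union_right)]
          have h1 : Disjoint a (interAll (b2 :: u2)) :=
            hd.mono Finset.subset_union_left
              ((interAll_subset_unionAll _).trans Finset.subset_union_right)
          have h2 : Disjoint b (interAll (a2 :: t2)) :=
            (hd.mono ((interAll_subset_unionAll _).trans Finset.subset_union_right)
              Finset.subset_union_left).symm
          ext x
          simp only [Finset.mem_inter, Finset.mem_union]
          constructor
          · rintro ⟨hx1 | hx1, hx2 | hx2⟩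
            · exact Or.inl ⟨hx1, hx2⟩
            · exact absurd hx2 (Finset.disjoint_left.mp h1 hx1)
            · exact absurd hx2 (Finset.disjoint_left.mp h2 hx1)
            · exact Or.inr ⟨hx1, hx2⟩
          · rintro (⟨h1, h2⟩ | ⟨h1, h2⟩)
            · exact ⟨Or.inl h1, Or.inl h2⟩
            · exact ⟨Or.inr h1, Or.inr h2⟩

lemma map_erase_id (Γ : Gen) (α : ℕ) (h : ∀ b ∈ Γ, α ∉ b) :
    Γ.map (·.erase α) = Γ := by
  induction Γ with
  | nil => rfl
  | cons b u ih =>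
    rw [List.map_cons, Finset.erase_eq_of_notMem (h b (by simp)),
      ih (fun c hc => h c (by simp [hc]))]

lemma zipWith_map_erase_left (t u : Gen) (α : ℕ) (h : ∀ b ∈ u, α ∉ b) :
    List.zipWith (· ∪ ·) (t.map (·.erase α)) u
      = (List.zipWith (· ∪ ·) t u).map (·.erase α) := by
  induction t generalizing u with
  | nil => simp
  | cons a t ih =>
    cases u with
    | nil => simp
    | cons b u =>
      rw [List.map_cons, List.zipWith_cons_cons, List.zipWith_cons_cons,
        List.map_cons, ih u (fun c hc => h c (by simp [hc]))]
      congr 1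
      rw [Finset.erase_union_distrib, Finset.erase_eq_of_notMem (h b (by simp))]

lemma zipWith_map_erase_right (t u : Gen) (α : ℕ) (h : ∀ b ∈ t, α ∉ b) :
    List.zipWith (· ∪ ·) t (u.map (·.erase α))
      = (List.zipWith (· ∪ ·) t u).map (·.erase α) := by
  induction t generalizing u with
  | nil => simp
  | cons a t ih =>
    cases u with
    | nil => simp
    | cons b u =>
      rw [List.map_cons, List.zipWith_cons_cons, List.zipWith_cons_cons,
        List.map_cons, ih u (fun c hc => h c (by simp [hc]))]
      congr 1
      rw [Finset.erase_union_distrib, Finset.erase_eq_of_notMem (h a (by simp))]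

lemma mem_unionAll {Γ : Gen} {α : ℕ} : α ∈ unionAll Γ ↔ ∃ b ∈ Γ, α ∈ b := by
  induction Γ with
  | nil => simp [unionAll]
  | cons c u ih => rw [unionAll_cons]; simp [ih]

lemma not_mem_of_not_mem_unionAll {Γ : Gen} {α : ℕ} (h : α ∉ unionAll Γ) :
    ∀ b ∈ Γ, α ∉ b := fun b hb hab => h (mem_unionAll.mpr ⟨b, hb, hab⟩)

lemma eps_erase_left {I J : Finset ℕ} {α : ℕ} (h : α ∈ I) :
    eps I J = eps (I.erase α) J + (J.filter (· < α)).card := by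
  unfold eps
  rw [← Finset.sum_erase_add _ _ h]

lemma eps_erase_right {I J : Finset ℕ} {α : ℕ} (hJ : α ∈ J) (hI : α ∉ I) :
    eps I J = eps I (J.erase α) + (I.filter (α < ·)).card := by
  unfold eps
  have key : ∀ a ∈ I, (J.filter (· < a)).card
      = ((J.erase α).filter (· < a)).card + if α < a then 1 else 0 := by
    intro a _
    rw [Finset.filter_erase]
    by_cases hc : α < a
    · rw [if_pos hc]
      have hm : α ∈ J.filter (· < a) := Finset.mem_filter.mpr ⟨hJ, hc⟩
      exact (Finset.card_erase_add_one hm).symm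
    · rw [if_neg hc, add_zero]
      have hm : α ∉ J.filter (· < a) := fun hm => hc (Finset.mem_filter.mp hm).2
      rw [Finset.erase_eq_of_notMem hm]
  rw [Finset.sum_congr rfl key, Finset.sum_add_distrib]
  congr 1
  rw [Finset.card_filter]

lemma filter_le_eq_filter_lt {J : Finset ℕ} {α : ℕ} (h : α ∉ J) :
    J.filter (· ≤ α) = J.filter (· < α) := by
  apply Finset.filter_congr
  intro b hb
  have hne : b ≠ α := fun he => h (he ▸ hb)
  simp [lt_iff_le_and_ne, hne]

lemma rankIn_union_left {I J : Finset ℕ} {α : ℕ} (hd : Disjoint I J) (hα : α ∈ I) :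
    rankIn (I ∪ J) α = rankIn I α + (J.filter (· < α)).card := by
  unfold rankIn
  rw [Finset.filter_union, Finset.card_union_of_disjoint
    (hd.mono (Finset.filter_subset _ _) (Finset.filter_subset _ _)),
    filter_le_eq_filter_lt (Finset.disjoint_left.mp hd hα)]

lemma rankIn_union_right {I J : Finset ℕ} {α : ℕ} (hd : Disjoint I J) (hα : α ∈ J) :
    rankIn (I ∪ J) α = rankIn J α + (I.filter (· < α)).card := by
  unfold rankIn
  rw [Finset.filter_union, Finset.card_union_of_disjoint
    (hd.mono (Finset.filter_subset _ _) (Finset.filter_subset _ _)),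
    filter_le_eq_filter_lt (Finset.disjoint_right.mp hd hα), add_comm]

lemma filter_gt_add_filter_lt {I : Finset ℕ} {α : ℕ} (h : α ∉ I) :
    (I.filter (α < ·)).card + (I.filter (· < α)).card = I.card := by
  have : I.filter (α < ·) = I.filter (¬ · < α) := by
    apply Finset.filter_congr
    intro b hb
    have hne : b ≠ α := fun he => h (he ▸ hb)
    simp only [not_lt, eq_iff_iff]
    constructor
    · exact fun hh => le_of_lt hh
    · intro hh
      exact lt_of_le_of_ne hh (Ne.symm hne)
  rw [this, add_comm, Finset.card_filter_add_card_filter_not]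

lemma neg_one_pow_add_two_mul (m c : ℕ) : ((-1 : ℚ)) ^ (m + 2 * c) = (-1 : ℚ) ^ m := by
  rw [pow_add, pow_mul, neg_one_sq, one_pow, mul_one]

lemma uplus_eq_zipWith {Λ Γ : Gen} (hΛ : Λ ≠ []) (hΓ : Γ ≠ []) :
    uplus Λ Γ = List.zipWith (· ∪ ·) Λ Γ := by
  cases Λ with
  | nil => simp at hΛ
  | cons a t =>
    cases Γ with
    | nil => simp at hΓ
    | cons b u => rfl

lemma liftM_single {M : Type*} [AddCommMonoid M] [Module ℚ M] (f : Gen → M) (Λ : Gen) :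
    (Finsupp.lift M ℚ Gen f) (Finsupp.single Λ 1) = f Λ := by
  simp

lemma liftM_single_c {M : Type*} [AddCommMonoid M] [Module ℚ M] (f : Gen → M) (Λ : Gen)
    (c : ℚ) : (Finsupp.lift M ℚ Gen f) (Finsupp.single Λ c) = c • f Λ := by
  simp

lemma mulA_single_single (Λ Γ : Gen) :
    mulA (Finsupp.single Λ 1) (Finsupp.single Γ 1) = mulGen Λ Γ := by
  unfold mulA
  rw [liftM_single, liftM_single]

lemma deltaA_single (Λ : Gen) :
    deltaA (Finsupp.single Λ 1) = ∑ α ∈ interAll Λ,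
      ((-1 : ℚ) ^ rankIn (interAll Λ) α) • Finsupp.single (Λ.map (·.erase α)) 1 := by
  unfold deltaA
  rw [liftM_single]

lemma mulGen_nil_left (Γ : Gen) : mulGen [] Γ = Finsupp.single Γ 1 := by
  unfold mulGen
  have hc : Compatible [] Γ := Or.inl rfl
  rw [if_pos hc]
  simp [eps, interAll, uplus]

lemma mulGen_nil_right (Λ : Gen) : mulGen Λ [] = Finsupp.single Λ 1 := by
  unfold mulGen
  have hc : Compatible Λ [] := Or.inr (Or.inl rfl)
  rw [if_pos hc, uplus_nil_right]
  simp [eps, interAll]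

lemma mulA_nil_left (x : 𝔄) : mulA (Finsupp.single [] 1) x = x := by
  have : mulA (Finsupp.single ([] : Gen) 1) = LinearMap.id := by
    apply Finsupp.lhom_ext
    intro Γ c
    unfold mulA
    rw [liftM_single, liftM_single_c, mulGen_nil_left]
    simp [Finsupp.smul_single]
  rw [this, LinearMap.id_apply]

lemma mulA_nil_right (x : 𝔄) : mulA x (Finsupp.single [] 1) = x := by
  have : mulA.flip (Finsupp.single ([] : Gen) 1) = LinearMap.id := by
    apply Finsupp.lhom_ext
    intro Λ c
    rw [LinearMap.flip_apply]
    unfold mulA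
    rw [liftM_single_c, LinearMap.smul_apply, liftM_single, mulGen_nil_right]
    simp [Finsupp.smul_single]
  have h2 := congrArg (fun g => g x) this
  simpa using h2

lemma deltaA_nil : deltaA (Finsupp.single ([] : Gen) 1) = 0 := by
  rw [deltaA_single]
  simp [interAll]

/-- The graded Leibniz rule for δ on a nonzero product of generators. -/
theorem stmt13 (Λ Γ : Gen) (h : Compatible Λ Γ) :
    deltaA (mulA (Finsupp.single Λ 1) (Finsupp.single Γ 1)) =
      mulA (deltaA (Finsupp.single Λ 1)) (Finsupp.single Γ 1)
      + ((-1 : ℚ) ^ (interAll Λ).card) •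
          mulA (Finsupp.single Λ 1) (deltaA (Finsupp.single Γ 1)) := by
  by_cases hΛ : Λ = []
  · subst hΛ
    rw [mulA_nil_left, deltaA_nil]
    rw [show interAll ([] : Gen) = ∅ from rfl]
    simp [mulA_nil_left]
  by_cases hΓ : Γ = []
  · subst hΓ
    rw [mulA_nil_right, deltaA_nil]
    have : mulA (deltaA (Finsupp.single Λ 1)) (Finsupp.single [] 1)
        = deltaA (Finsupp.single Λ 1) := mulA_nil_right _
    rw [this]
    simp
  rcases h with h | h | ⟨hlen, hd⟩
  · exact absurd h hΛ
  · exact absurd h hΓ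
  -- main case
  set I := interAll Λ with hI
  set J := interAll Γ with hJdef
  have hIU : I ⊆ unionAll Λ := interAll_subset_unionAll Λ
  have hJU : J ⊆ unionAll Γ := interAll_subset_unionAll Γ
  have hIJ : Disjoint I J := hd.mono hIU hJU
  have hIΓ : ∀ α ∈ I, α ∉ unionAll Γ := fun α hα => Finset.disjoint_left.mp hd (hIU hα)
  have hJΛ : ∀ α ∈ J, α ∉ unionAll Λ := fun α hα => Finset.disjoint_right.mp hd (hJU hα)
  have hIJu : interAll (uplus Λ Γ) = I ∪ J := by
    rw [uplus_eq_zipWith hΛ hΓ]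
    exact interAll_zipWith Λ Γ hΛ hΓ hlen hd
  have hmapL : ∀ α ∈ I, uplus (Λ.map (·.erase α)) Γ = (uplus Λ Γ).map (·.erase α) := by
    intro α hα
    rw [uplus_eq_zipWith (by simp [hΛ]) hΓ, uplus_eq_zipWith hΛ hΓ]
    exact zipWith_map_erase_left Λ Γ α (not_mem_of_not_mem_unionAll (hIΓ α hα))
  have hmapR : ∀ α ∈ J, uplus Λ (Γ.map (·.erase α)) = (uplus Λ Γ).map (·.erase α) := by
    intro α hα
    rw [uplus_eq_zipWith hΛ (by simp [hΓ]), uplus_eq_zipWith hΛ hΓ]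
    exact zipWith_map_erase_right Λ Γ α (not_mem_of_not_mem_unionAll (hJΛ α hα))
  have compatL : ∀ α : ℕ, Compatible (Λ.map (·.erase α)) Γ := fun α =>
    Or.inr (Or.inr ⟨by simpa using hlen, hd.mono (unionAll_map_erase_subset Λ α) le_rfl⟩)
  have compatR : ∀ α : ℕ, Compatible Λ (Γ.map (·.erase α)) := fun α =>
    Or.inr (Or.inr ⟨by simpa using hlen, hd.mono le_rfl (unionAll_map_erase_subset Γ α)⟩)
  -- LHS
  rw [mulA_single_single]
  unfold mulGen
  have hc : Compatible Λ Γ := Or.inr (Or.inr ⟨hlen, hd⟩)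
  rw [if_pos hc]
  rw [map_smul, deltaA_single, hIJu, Finset.sum_union hIJ, smul_add, Finset.smul_sum,
    Finset.smul_sum]
  -- RHS
  rw [deltaA_single Λ, deltaA_single Γ, ← hI, ← hJdef, map_sum, LinearMap.sum_apply,
    map_sum, Finset.smul_sum]
  congr 1
  · apply Finset.sum_congr rfl
    intro α hα
    rw [map_smul, LinearMap.smul_apply, mulA_single_single]
    unfold mulGen
    rw [if_pos (compatL α), interAll_map_erase Λ hΛ α, ← hI, ← hJdef, hmapL α hα,
      smul_smul, smul_smul, ← pow_add, ← pow_add]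
    congr 1
    rw [show eps I J + rankIn (I ∪ J) α
        = rankIn I α + eps (I.erase α) J + 2 * (J.filter (· < α)).card by
      rw [rankIn_union_left hIJ hα, eps_erase_left hα]; ring]
    rw [neg_one_pow_add_two_mul]
  · apply Finset.sum_congr rfl
    intro α hα
    have hαI : α ∉ I := Finset.disjoint_right.mp hIJ hα
    rw [map_smul, mulA_single_single]
    unfold mulGen
    rw [if_pos (compatR α), interAll_map_erase Γ hΓ α, ← hI, ← hJdef, hmapR α hα,
      smul_smul, smul_smul, smul_smul, ← pow_add, ← pow_add, ← pow_add]
    congr 1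
    congr 1
    rw [rankIn_union_right hIJ hα, eps_erase_right hα hαI, ← filter_gt_add_filter_lt hαI]
    ring
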